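/- There exists a universal constant c > 0 such that for every γ ∈ (0,1] and every q ∈ (0,1/2) with L := ⌊1/q^γ⌋ ≥ 2, the East model on Λ = {1,…,L} satisfies q·c/C(𝟙0,B) ≤ T_hit(L) ≤ q/C(𝟙0,B), where B = {σ ∈ Ω_Λ : σ_L = 1} and C(𝟙0,B) is the capacity between 𝟙0 and B. -/

import Mathlib

open Filter Topology MeasureTheory

namespace East

/-- Configurations of the East model on `Λ = {1,…,L}`: `true` = particle (1),
`false` = vacancy (0).  The index `x : Fin L` corresponds to the site `x.val + 1`. -/
abbrev Cfg (L : ℕ) := Fin L → Bool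

noncomputable section

/-- Weight of a configuration under the product Bernoulli(1−q) measure π. -/
def weight (L : ℕ) (q : ℝ) (σ : Cfg L) : ℝ :=
  ∏ x : Fin L, (if σ x then (1 - q) else q)

/-- Mean of `f` under π. -/
def mean (L : ℕ) (q : ℝ) (f : Cfg L → ℝ) : ℝ :=
  ∑ σ : Cfg L, weight L q σ * f σ

/-- π-measure of a set of configurations. -/
def measSet (L : ℕ) (q : ℝ) (A : Set (Cfg L)) : ℝ :=
  ∑ σ : Cfg L, Set.indicator A (weight L q) σ

/-- The East constraint at `x`, as a 0/1 real number: the leftmost site is unconstrained,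
and any other site is free iff its left neighbour is a vacancy. -/
def cR (L : ℕ) (σ : Cfg L) (x : Fin L) : ℝ :=
  if x.val = 0 then 1
  else if σ ⟨x.val - 1, lt_of_le_of_lt (Nat.sub_le _ _) x.isLt⟩ = false then 1 else 0

/-- The East constraint at `x`, as a proposition. -/
def constraintP (L : ℕ) (σ : Cfg L) (x : Fin L) : Prop :=
  x.val = 0 ∨ σ ⟨x.val - 1, lt_of_le_of_lt (Nat.sub_le _ _) x.isLt⟩ = false

/-- Flip the spin at `x`. -/
def flip (L : ℕ) (σ : Cfg L) (x : Fin L) : Cfg L :=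
  Function.update σ x (!(σ x))

/-- Local mean `π_x f`. -/
def locMean (L : ℕ) (q : ℝ) (f : Cfg L → ℝ) (σ : Cfg L) (x : Fin L) : ℝ :=
  (1 - q) * f (Function.update σ x true) + q * f (Function.update σ x false)

/-- The East generator `𝓛 f (σ) = Σ_x c_x(σ) (π_x f (σ) − f σ)`. -/
def gen (L : ℕ) (q : ℝ) (f : Cfg L → ℝ) (σ : Cfg L) : ℝ :=
  ∑ x : Fin L, cR L σ x * (locMean L q f σ x - f σ)

/-- Dirichlet form `𝓓(f) = π(f ⬝ (−𝓛f))`. -/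
def dirichlet (L : ℕ) (q : ℝ) (f : Cfg L → ℝ) : ℝ :=
  mean L q (fun σ => f σ * (-(gen L q f σ)))

/-- Variance under π. -/
def variance (L : ℕ) (q : ℝ) (f : Cfg L → ℝ) : ℝ :=
  mean L q (fun σ => f σ ^ 2) - (mean L q f) ^ 2

/-- Spectral gap: `inf {𝓓(f)/Var(f) : f non-constant}`. -/
def gap (L : ℕ) (q : ℝ) : ℝ :=
  sInf {r : ℝ | ∃ f : Cfg L → ℝ, (¬ ∀ σ τ : Cfg L, f σ = f τ) ∧
    r = dirichlet L q f / variance L q f}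

/-- Relaxation time `T_rel(L) = 1 / gap(L)`. -/
def Trel (L : ℕ) (q : ℝ) : ℝ := 1 / gap L q

/-- Jump rate of the move at `x` from `σ`: the constraint times `q` (killing a particle
costs `q`… i.e. a particle flips to a vacancy at rate `q`) or `p = 1−q`. -/
def rate (L : ℕ) (q : ℝ) (σ : Cfg L) (x : Fin L) : ℝ :=
  cR L σ x * (if σ x then q else (1 - q))

/-- The East Markov rate matrix `K`, with off-diagonal entries
`K(σ,σ^x) = c_x(σ)(q·σ_x + p(1−σ_x))` and zero row sums. -/
def K (L : ℕ) (q : ℝ) : Matrix (Cfg L) (Cfg L) ℝ := fun σ η =>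
  (∑ x : Fin L, if η = flip L σ x then rate L q σ x else 0)
    - (if η = σ then ∑ x : Fin L, rate L q σ x else 0)

/-- Time-`t` law of the East process started from `η`, evaluated on a set `E`:
`P_t(η,E) = Σ_{σ∈E} exp(tK)(η,σ)`. -/
def law (L : ℕ) (q t : ℝ) (η : Cfg L) (E : Set (Cfg L)) : ℝ :=
  ∑ σ : Cfg L, Set.indicator E (fun σ' => NormedSpace.exp (t • K L q) η σ') σ

/-- Total variation distance of the time-`t` law started at `η` from π. -/
def tvDist (L : ℕ) (q t : ℝ) (η : Cfg L) : ℝ :=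
  (1 / 2) * ∑ σ : Cfg L, |NormedSpace.exp (t • K L q) η σ - weight L q σ|

/-- Mixing time `T_mix(L) = inf {t ≥ 0 : max_η ‖P_t(η,·) − π‖_TV ≤ 1/4}`. -/
def Tmix (L : ℕ) (q : ℝ) : ℝ :=
  sInf {t : ℝ | 0 ≤ t ∧ ∀ η : Cfg L, tvDist L q t η ≤ 1 / 4}

/-- The sub-rate matrix of `K` indexed by the complement of the target set `B`. -/
def Ksub (L : ℕ) (q : ℝ) (B : Set (Cfg L)) :
    Matrix {σ : Cfg L // σ ∉ B} {σ : Cfg L // σ ∉ B} ℝ :=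
  fun a b => K L q a.1 b.1

/-- Survival function of the hitting time of `B` started from `η`:
`P_η(τ_B > t) = Σ_{σ∉B} exp(t K_{Bᶜ})(η,σ)`  (equal to `0` when `η ∈ B`). -/
def surv (L : ℕ) (q : ℝ) (B : Set (Cfg L)) (η : Cfg L) (t : ℝ) : ℝ :=
  letI : Fintype {σ : Cfg L // σ ∉ B} := Fintype.ofFinite _
  ∑ a : {σ : Cfg L // σ ∉ B}, ∑ b : {σ : Cfg L // σ ∉ B},
    (if a.1 = η then NormedSpace.exp (t • Ksub L q B) a b else 0)

/-- Expected hitting time `E_η[τ_B] = ∫₀^∞ P_η(τ_B > t) dt`. -/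
def expHit (L : ℕ) (q : ℝ) (B : Set (Cfg L)) (η : Cfg L) : ℝ :=
  ∫ t in Set.Ioi (0 : ℝ), surv L q B η t

/-- The set `{σ : σ_L = 1}` (particle at the last site). -/
def lastOneSet (L : ℕ) : Set (Cfg L) :=
  {σ | ∀ x : Fin L, x.val + 1 = L → σ x = true}

/-- The set `{σ : σ_L = 0}` (vacancy at the last site). -/
def lastZeroSet (L : ℕ) : Set (Cfg L) :=
  {σ | ∀ x : Fin L, x.val + 1 = L → σ x = false}

/-- The configuration `𝟙0`: a single vacancy at the last site `L`. -/
def oneZero (L : ℕ) : Cfg L := fun x => decide (x.val + 1 ≠ L)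

/-- The all-ones configuration `𝟙`. -/
def allOnes (L : ℕ) : Cfg L := fun _ => true

/-- Mean hitting time `T_hit(L) = E_{𝟙0}[τ_{η_L = 1}]`. -/
def Thit (L : ℕ) (q : ℝ) : ℝ := expHit L q (lastOneSet L) (oneZero L)

/-- `f ≍ h` : `0 < liminf_{q↓0} f(q)/h(q) ≤ limsup_{q↓0} f(q)/h(q) < ∞`
(liminf/limsup taken in `[0,∞]`). -/
def Asymp (f h : ℝ → ℝ) : Prop :=
  0 < Filter.liminf (fun q => ENNReal.ofReal (f q / h q)) (𝓝[>] (0 : ℝ)) ∧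
  Filter.limsup (fun q => ENNReal.ofReal (f q / h q)) (𝓝[>] (0 : ℝ)) < ⊤

/-- `f ≻ h` : there is `β > 0` with `liminf_{q↓0} q^β · f(q)/h(q) > 0`. -/
def SuccSep (f h : ℝ → ℝ) : Prop :=
  ∃ β : ℝ, 0 < β ∧
    0 < Filter.liminf (fun q => ENNReal.ofReal (q ^ β * (f q / h q))) (𝓝[>] (0 : ℝ))

/-- Number of vacancies (zeros) in a configuration. -/
def zeros (L : ℕ) (σ : Cfg L) : ℕ :=
  (Finset.univ.filter (fun x : Fin L => σ x = false)).card

/-- One legal East move, with both endpoint configurations having at most `m` vacancies. -/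
def stepZ (L m : ℕ) (σ σ' : Cfg L) : Prop :=
  (∃ x : Fin L, constraintP L σ x ∧ σ' = flip L σ x) ∧ zeros L σ ≤ m ∧ zeros L σ' ≤ m

/-- Configuration extended to sites `0,1,…`: site `0` carries the frozen vacancy. -/
def extCfg (L : ℕ) (η : Cfg L) : ℕ → Bool :=
  fun i => if h : 1 ≤ i ∧ i ≤ L then η ⟨i - 1, by omega⟩ else false

/-- The gap at site `x`: distance to the nearest vacancy strictly to the left
(including the frozen vacancy at the origin). -/
def gapAt (L : ℕ) (η : Cfg L) (x : ℕ) : ℕ :=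
  sInf {d : ℕ | 0 < d ∧ extCfg L η (x - d) = false}

/-- `φ_{d,x}`: remove the vacancy at site `x` if it is present with gap exactly `d`. -/
def phi (L : ℕ) (d x : ℕ) (η : Cfg L) : Cfg L :=
  fun i => if i.val + 1 = x ∧ η i = false ∧ gapAt L η (i.val + 1) = d then true else η i

/-- The deterministic dynamics: step `k+1` applies `φ_{α_{k+1}}`, where
`α_{k+1} = (k / L + 1, L − k % L)` enumerates `{1,…,L}²` in the order `≺`
(gap sizes increasing; for a fixed gap size, sites from right to left). -/
def detDyn (L : ℕ) (η : Cfg L) : ℕ → Cfg L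
  | 0 => η
  | k + 1 => phi L (k / L + 1) (L - k % L) (detDyn L η k)

/-- The set `A_*` of configurations driven to `𝟙0` by the deterministic dynamics. -/
def Astar (L : ℕ) : Set (Cfg L) :=
  {η | detDyn L η (L ^ 2) = oneZero L}

/-- The internal boundary `∂A_*` of `A_*`. -/
def boundaryAstar (L : ℕ) : Set (Cfg L) :=
  {σ | σ ∈ Astar L ∧ ∃ x : Fin L, constraintP L σ x ∧ flip L σ x ∉ Astar L}

/-- Capacity between `a` and `B`, via the Dirichlet principle:
`C(a,B) = inf {𝓓(f) : f(a) = 1, f ≡ 0 on B}`. -/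
def capacity (L : ℕ) (q : ℝ) (a : Cfg L) (B : Set (Cfg L)) : ℝ :=
  sInf {r : ℝ | ∃ f : Cfg L → ℝ, f a = 1 ∧ (∀ σ ∈ B, f σ = 0) ∧ r = dirichlet L q f}

section AuxBasic

variable {L : ℕ} {q : ℝ}

lemma flip_apply_self (σ : Cfg L) (x : Fin L) : flip L σ x x = !(σ x) :=
  Function.update_self x _ σ

lemma flip_apply_ne (σ : Cfg L) {x y : Fin L} (h : y ≠ x) : flip L σ x y = σ y :=
  Function.update_of_ne h _ σ

lemma flip_flip (σ : Cfg L) (x : Fin L) : flip L (flip L σ x) x = σ := by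
  funext y
  by_cases h : y = x
  · subst h; simp [flip_apply_self]
  · rw [flip_apply_ne _ h, flip_apply_ne _ h]

lemma flip_involutive (x : Fin L) : Function.Involutive (fun σ : Cfg L => flip L σ x) :=
  fun σ => flip_flip σ x

lemma cR_flip (σ : Cfg L) (x : Fin L) : cR L (flip L σ x) x = cR L σ x := by
  unfold cR
  by_cases h : x.val = 0
  · simp [h]
  · have hne : (⟨x.val - 1, lt_of_le_of_lt (Nat.sub_le _ _) x.isLt⟩ : Fin L) ≠ x := by
      intro hcontra
      have := congrArg Fin.val hcontra
      simp only [Fin.val_mk] at this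
      omega
    rw [if_neg h, if_neg h, flip_apply_ne _ hne]

lemma cR_eq_one_iff (σ : Cfg L) (x : Fin L) : cR L σ x = 1 ↔ constraintP L σ x := by
  unfold cR constraintP
  by_cases h : x.val = 0
  · simp [h]
  · by_cases h2 : σ ⟨x.val - 1, lt_of_le_of_lt (Nat.sub_le _ _) x.isLt⟩ = false <;>
      simp [h, h2]

lemma cR_nonneg (σ : Cfg L) (x : Fin L) : 0 ≤ cR L σ x := by
  unfold cR; split
  · norm_num
  · split <;> norm_num

lemma rate_nonneg (hq0 : 0 < q) (hq1 : q < 1) (σ : Cfg L) (x : Fin L) :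
    0 ≤ rate L q σ x := by
  unfold rate
  apply mul_nonneg (cR_nonneg σ x)
  split <;> linarith

lemma rate_pos (hq0 : 0 < q) (hq1 : q < 1) {σ : Cfg L} {x : Fin L}
    (h : constraintP L σ x) : 0 < rate L q σ x := by
  unfold rate
  rw [(cR_eq_one_iff σ x).2 h, one_mul]
  split <;> linarith

lemma weight_pos (hq0 : 0 < q) (hq1 : q < 1) (σ : Cfg L) : 0 < weight L q σ := by
  unfold weight
  apply Finset.prod_pos
  intro x _
  split <;> linarith

lemma weight_flip_mul_rate (σ : Cfg L) (x : Fin L) :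
    weight L q (flip L σ x) * rate L q (flip L σ x) x = weight L q σ * rate L q σ x := by
  unfold weight rate
  rw [cR_flip]
  rw [← Finset.mul_prod_erase Finset.univ
        (fun y => if σ y = true then (1-q) else q) (Finset.mem_univ x),
      ← Finset.mul_prod_erase Finset.univ
        (fun y => if flip L σ x y = true then (1-q) else q) (Finset.mem_univ x)]
  have hrest : ∏ y ∈ Finset.univ.erase x, (if flip L σ x y then (1-q) else q)
      = ∏ y ∈ Finset.univ.erase x, (if σ y then (1-q) else q) := by
    apply Finset.prod_congr rfl
    intro y hy
    rw [flip_apply_ne _ (Finset.ne_of_mem_erase hy)]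
  rw [hrest, flip_apply_self]
  cases h : σ x <;> simp [h] <;> ring

lemma gen_eq (f : Cfg L → ℝ) (σ : Cfg L) :
    gen L q f σ = ∑ x : Fin L, rate L q σ x * (f (flip L σ x) - f σ) := by
  unfold gen rate
  apply Finset.sum_congr rfl
  intro x _
  rw [mul_assoc]
  congr 1
  unfold locMean
  cases h : σ x
  · have hflip : flip L σ x = Function.update σ x true := by
      unfold flip; rw [h]; simp
    have h1 : Function.update σ x false = σ := by
      funext y; by_cases hy : y = x
      · subst hy; rw [Function.update_self, h]
      · rw [Function.update_of_ne hy]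
    rw [hflip, h1]
    norm_num
    ring
  · have hflip : flip L σ x = Function.update σ x false := by
      unfold flip; rw [h]; simp
    have h1 : Function.update σ x true = σ := by
      funext y; by_cases hy : y = x
      · subst hy; rw [Function.update_self, h]
      · rw [Function.update_of_ne hy]
    rw [hflip, h1]
    norm_num
    ring

lemma gen_add (f g : Cfg L → ℝ) (σ : Cfg L) :
    gen L q (f + g) σ = gen L q f σ + gen L q g σ := by
  rw [gen_eq, gen_eq, gen_eq, ← Finset.sum_add_distrib]
  apply Finset.sum_congr rfl
  intro x _
  simp only [Pi.add_apply]
  ring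

/-- The symmetric bilinear Dirichlet form. -/
def Dform (L : ℕ) (q : ℝ) (f g : Cfg L → ℝ) : ℝ :=
  ∑ σ : Cfg L, weight L q σ * (f σ * (-(gen L q g σ)))

lemma dirichlet_eq_Dform (f : Cfg L → ℝ) : dirichlet L q f = Dform L q f f := rfl

lemma sum_flip_reindex (F : Cfg L → Fin L → ℝ) :
    ∑ σ : Cfg L, ∑ x : Fin L, F σ x = ∑ σ : Cfg L, ∑ x : Fin L, F (flip L σ x) x := by
  calc ∑ σ : Cfg L, ∑ x : Fin L, F σ x = ∑ x : Fin L, ∑ σ : Cfg L, F σ x :=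
        Finset.sum_comm
    _ = ∑ x : Fin L, ∑ σ : Cfg L, F (flip L σ x) x := by
        apply Finset.sum_congr rfl
        intro x _
        exact (Fintype.sum_bijective _ (flip_involutive x).bijective _ _ (fun σ => rfl)).symm
    _ = ∑ σ : Cfg L, ∑ x : Fin L, F (flip L σ x) x := Finset.sum_comm

lemma Dform_expand (f g : Cfg L → ℝ) :
    Dform L q f g = (∑ σ : Cfg L, ∑ x : Fin L,
        weight L q σ * rate L q σ x * (f σ * g σ))
      - ∑ σ : Cfg L, ∑ x : Fin L,
        weight L q σ * rate L q σ x * (f σ * g (flip L σ x)) := by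
  unfold Dform
  rw [← Finset.sum_sub_distrib]
  apply Finset.sum_congr rfl
  intro σ _
  rw [gen_eq, ← Finset.sum_sub_distrib]
  have : weight L q σ * (f σ * -(∑ x : Fin L, rate L q σ x * (g (flip L σ x) - g σ)))
      = ∑ x : Fin L, weight L q σ * (f σ * -(rate L q σ x * (g (flip L σ x) - g σ))) := by
    rw [← Finset.sum_neg_distrib, Finset.mul_sum, Finset.mul_sum]
  rw [this]
  apply Finset.sum_congr rfl
  intro x _
  ring

lemma cross_swap (f g : Cfg L → ℝ) :
    (∑ σ : Cfg L, ∑ x : Fin L, weight L q σ * rate L q σ x * (f σ * g (flip L σ x)))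
      = ∑ σ : Cfg L, ∑ x : Fin L, weight L q σ * rate L q σ x * (g σ * f (flip L σ x)) := by
  rw [sum_flip_reindex (fun σ x => weight L q σ * rate L q σ x * (f σ * g (flip L σ x)))]
  apply Finset.sum_congr rfl; intro σ _
  apply Finset.sum_congr rfl; intro x _
  rw [weight_flip_mul_rate, flip_flip]
  ring

lemma Dform_symm (f g : Cfg L → ℝ) : Dform L q f g = Dform L q g f := by
  rw [Dform_expand, Dform_expand, cross_swap]
  congr 1
  apply Finset.sum_congr rfl; intro σ _
  apply Finset.sum_congr rfl; intro x _
  ring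

lemma Dform_eq_half (f g : Cfg L → ℝ) :
    Dform L q f g = (1/2) * ∑ σ : Cfg L, ∑ x : Fin L,
      weight L q σ * rate L q σ x * ((f (flip L σ x) - f σ) * (g (flip L σ x) - g σ)) := by
  have expand : ∀ σ : Cfg L, ∀ x : Fin L,
      weight L q σ * rate L q σ x * ((f (flip L σ x) - f σ) * (g (flip L σ x) - g σ))
      = weight L q σ * rate L q σ x * (f (flip L σ x) * g (flip L σ x))
        - weight L q σ * rate L q σ x * (g σ * f (flip L σ x))
        - weight L q σ * rate L q σ x * (f σ * g (flip L σ x))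
        + weight L q σ * rate L q σ x * (f σ * g σ) := by intro σ x; ring
  have hsplit : (∑ σ : Cfg L, ∑ x : Fin L,
      weight L q σ * rate L q σ x * ((f (flip L σ x) - f σ) * (g (flip L σ x) - g σ)))
      = (∑ σ : Cfg L, ∑ x : Fin L,
          weight L q σ * rate L q σ x * (f (flip L σ x) * g (flip L σ x)))
        - (∑ σ : Cfg L, ∑ x : Fin L,
          weight L q σ * rate L q σ x * (g σ * f (flip L σ x)))
        - (∑ σ : Cfg L, ∑ x : Fin L,
          weight L q σ * rate L q σ x * (f σ * g (flip L σ x)))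
        + (∑ σ : Cfg L, ∑ x : Fin L,
          weight L q σ * rate L q σ x * (f σ * g σ)) := by
    rw [show (∑ σ : Cfg L, ∑ x : Fin L,
        weight L q σ * rate L q σ x * ((f (flip L σ x) - f σ) * (g (flip L σ x) - g σ)))
        = ∑ σ : Cfg L, ∑ x : Fin L,
          (weight L q σ * rate L q σ x * (f (flip L σ x) * g (flip L σ x))
            - weight L q σ * rate L q σ x * (g σ * f (flip L σ x))
            - weight L q σ * rate L q σ x * (f σ * g (flip L σ x))
            + weight L q σ * rate L q σ x * (f σ * g σ)) from
      Finset.sum_congr rfl (fun σ _ => Finset.sum_congr rfl (fun x _ => expand σ x))]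
    simp only [Finset.sum_sub_distrib, Finset.sum_add_distrib]
  have hdiag : (∑ σ : Cfg L, ∑ x : Fin L,
      weight L q σ * rate L q σ x * (f (flip L σ x) * g (flip L σ x)))
      = ∑ σ : Cfg L, ∑ x : Fin L, weight L q σ * rate L q σ x * (f σ * g σ) := by
    rw [sum_flip_reindex
      (fun σ x => weight L q σ * rate L q σ x * (f (flip L σ x) * g (flip L σ x)))]
    apply Finset.sum_congr rfl; intro σ _
    apply Finset.sum_congr rfl; intro x _
    rw [weight_flip_mul_rate, flip_flip]
  have h1 := Dform_expand (L := L) (q := q) f g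
  have h2 := Dform_expand (L := L) (q := q) g f
  have h3 := cross_swap (L := L) (q := q) f g
  have hgf : (∑ σ : Cfg L, ∑ x : Fin L, weight L q σ * rate L q σ x * (g σ * f σ))
      = ∑ σ : Cfg L, ∑ x : Fin L, weight L q σ * rate L q σ x * (f σ * g σ) := by
    apply Finset.sum_congr rfl; intro σ _
    apply Finset.sum_congr rfl; intro x _
    ring
  rw [hsplit, hdiag]
  linarith [Dform_symm (L := L) (q := q) f g, h1, h2, h3, hgf]

lemma dirichlet_eq_half (f : Cfg L → ℝ) :
    dirichlet L q f = (1/2) * ∑ σ : Cfg L, ∑ x : Fin L,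
      weight L q σ * rate L q σ x * ((f (flip L σ x) - f σ) * (f (flip L σ x) - f σ)) := by
  rw [dirichlet_eq_Dform, Dform_eq_half]

lemma dirichlet_nonneg (hq0 : 0 < q) (hq1 : q < 1) (f : Cfg L → ℝ) :
    0 ≤ dirichlet L q f := by
  rw [dirichlet_eq_half]
  apply mul_nonneg (by norm_num)
  apply Finset.sum_nonneg; intro σ _
  apply Finset.sum_nonneg; intro x _
  apply mul_nonneg (mul_nonneg (weight_pos hq0 hq1 σ).le (rate_nonneg hq0 hq1 σ x))
  exact mul_self_nonneg _

end AuxBasic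

section AuxConn

variable {L : ℕ} {q : ℝ}

lemma flip_invariant_of_dirichlet_zero (hq0 : 0 < q) (hq1 : q < 1) {f : Cfg L → ℝ}
    (hf : dirichlet L q f = 0) :
    ∀ σ : Cfg L, ∀ x : Fin L, constraintP L σ x → f (flip L σ x) = f σ := by
  intro σ x hx
  rw [dirichlet_eq_half] at hf
  have hterm : ∀ τ : Cfg L, ∀ y : Fin L,
      0 ≤ weight L q τ * rate L q τ y * ((f (flip L τ y) - f τ) * (f (flip L τ y) - f τ)) :=
    fun τ y => mul_nonneg (mul_nonneg (weight_pos hq0 hq1 τ).le (rate_nonneg hq0 hq1 τ y))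
      (mul_self_nonneg _)
  have hsum0 : (∑ τ : Cfg L, ∑ y : Fin L,
      weight L q τ * rate L q τ y * ((f (flip L τ y) - f τ) * (f (flip L τ y) - f τ))) = 0 := by
    linarith
  have h1 := (Finset.sum_eq_zero_iff_of_nonneg
    (fun τ _ => Finset.sum_nonneg (fun y _ => hterm τ y))).1 hsum0 σ (Finset.mem_univ σ)
  have h2 := (Finset.sum_eq_zero_iff_of_nonneg (fun y _ => hterm σ y)).1 h1 x (Finset.mem_univ x)
  have hwr : 0 < weight L q σ * rate L q σ x :=
    mul_pos (weight_pos hq0 hq1 σ) (rate_pos hq0 hq1 hx)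
  have : (f (flip L σ x) - f σ) * (f (flip L σ x) - f σ) = 0 := by
    by_contra hne
    exact hne (by
      have := mul_eq_zero.1 h2
      rcases this with h | h
      · exact absurd h hwr.ne'
      · exact h)
  have := mul_self_eq_zero.1 this
  linarith

lemma const_of_flip_invariant {f : Cfg L → ℝ}
    (hinv : ∀ σ : Cfg L, ∀ x : Fin L, constraintP L σ x → f (flip L σ x) = f σ) :
    ∀ σ τ : Cfg L, f σ = f τ := by
  suffices hbot : ∀ σ : Cfg L, f σ = f (fun _ => false) by
    intro σ τ; rw [hbot σ, hbot τ]
  intro σ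
  set ρ : ℕ → Cfg L := fun k => fun i => if k ≤ i.val then σ i else false with hρdef
  have hstep : ∀ k : ℕ, f (ρ k) = f (ρ (k + 1)) := by
    intro k
    by_cases hk : k < L
    · set x : Fin L := ⟨k, hk⟩ with hxdef
      by_cases hv : σ x = true
      · have hρflip : ρ k = flip L (ρ (k + 1)) x := by
          funext i
          by_cases hi : i = x
          · subst hi
            rw [flip_apply_self]
            show (if k ≤ x.val then σ x else false) = !(if k + 1 ≤ x.val then σ x else false)
            have hival : x.val = k := rfl
            rw [if_pos (by omega), if_neg (by omega), hv]
            rfl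
          · rw [flip_apply_ne _ hi]
            show (if k ≤ i.val then σ i else false) = (if k + 1 ≤ i.val then σ i else false)
            have hival : i.val ≠ k := fun h => hi (Fin.ext h)
            rcases lt_or_gt_of_ne hival with h' | h'
            · rw [if_neg (by omega), if_neg (by omega)]
            · rw [if_pos (by omega), if_pos (by omega)]
        have hcon : constraintP L (ρ (k + 1)) x := by
          unfold constraintP
          by_cases h0 : (x : Fin L).val = 0
          · left; exact h0
          · right
            show (if k + 1 ≤ (⟨x.val - 1, _⟩ : Fin L).val then σ _ else false) = false
            rw [if_neg (by show ¬ (k + 1 ≤ x.val - 1); have : x.val = k := rfl; omega)]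
        rw [hρflip, hinv _ _ hcon]
      · have : ρ k = ρ (k + 1) := by
          funext i
          by_cases hi : i = x
          · subst hi
            show (if k ≤ x.val then σ x else false) = (if k + 1 ≤ x.val then σ x else false)
            have hival : x.val = k := rfl
            rw [if_pos (by omega), if_neg (by omega), Bool.eq_false_iff.2 hv]
          · show (if k ≤ i.val then σ i else false) = (if k + 1 ≤ i.val then σ i else false)
            have hival : i.val ≠ k := fun h => hi (Fin.ext h)
            rcases lt_or_gt_of_ne hival with h' | h'
            · rw [if_neg (by omega), if_neg (by omega)]
            · rw [if_pos (by omega), if_pos (by omega)]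
        rw [this]
    · have : ρ k = ρ (k + 1) := by
        funext i
        show (if k ≤ i.val then σ i else false) = (if k + 1 ≤ i.val then σ i else false)
        have := i.isLt
        rw [if_neg (by omega), if_neg (by omega)]
      rw [this]
  have hchain : ∀ n : ℕ, f (ρ 0) = f (ρ n) := by
    intro n
    induction n with
    | zero => rfl
    | succ m ih => rw [ih, hstep m]
  have h0 : ρ 0 = σ := by
    funext i; show (if 0 ≤ i.val then σ i else false) = σ i; rw [if_pos (Nat.zero_le _)]
  have hL : ρ L = (fun _ => false) := by
    funext i; show (if L ≤ i.val then σ i else false) = false; rw [if_neg (by omega)]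
  have := hchain L
  rw [h0, hL] at this
  exact this

lemma const_of_dirichlet_zero (hq0 : 0 < q) (hq1 : q < 1) {f : Cfg L → ℝ}
    (hf : dirichlet L q f = 0) : ∀ σ τ : Cfg L, f σ = f τ :=
  const_of_flip_invariant (flip_invariant_of_dirichlet_zero hq0 hq1 hf)

end AuxConn

section AuxMeasure

variable {L : ℕ} {q : ℝ}

lemma sum_weight : ∑ σ : Cfg L, weight L q σ = 1 := by
  unfold weight
  have key := Finset.sum_prod_piFinset (ι := Fin L) (Finset.univ : Finset Bool)
    (fun (_ : Fin L) (b : Bool) => if b then (1 - q) else q)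
  rw [Fintype.piFinset_univ] at key
  rw [show (∑ σ : Cfg L, ∏ x : Fin L, if σ x = true then (1 - q) else q)
      = ∑ σ : Cfg L, ∏ x : Fin L,
          (fun (_ : Fin L) (b : Bool) => if b then (1 - q) else q) x (σ x) from rfl]
  rw [key]
  simp

/-- The distinguished last site. -/
def lastSite (L : ℕ) (hL : 0 < L) : Fin L := ⟨L - 1, by omega⟩

lemma lastSite_val (hL : 0 < L) : (lastSite L hL).val + 1 = L := by
  unfold lastSite; simp; omega

lemma not_mem_lastOneSet_iff (hL : 0 < L) (σ : Cfg L) :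
    σ ∉ lastOneSet L ↔ σ (lastSite L hL) = false := by
  unfold lastOneSet
  constructor
  · intro h
    by_contra hc
    apply h
    intro x hx
    have hxeq : x = lastSite L hL := Fin.ext (by have := lastSite_val hL; omega)
    subst hxeq
    exact Bool.not_eq_false _ |>.mp hc
  · intro h hmem
    have := hmem (lastSite L hL) (lastSite_val hL)
    rw [h] at this
    exact Bool.false_ne_true this

lemma sum_weight_lastFalse (hL : 0 < L) :
    ∑ σ : Cfg L, (if σ (lastSite L hL) = false then weight L q σ else 0) = q := by
  set x0 := lastSite L hL
  have key : ∀ σ : Cfg L, (if σ x0 = false then weight L q σ else 0)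
      = ∏ x : Fin L, (fun (x : Fin L) (b : Bool) =>
          if x = x0 then (if b then 0 else q) else (if b then (1 - q) else q)) x (σ x) := by
    intro σ
    cases h : σ x0
    · rw [if_pos rfl]
      unfold weight
      apply Finset.prod_congr rfl
      intro y _
      by_cases hy : y = x0
      · subst hy; rw [h]; simp
      · simp [hy]
    · rw [if_neg (by simp [h])]
      symm
      apply Finset.prod_eq_zero (Finset.mem_univ x0)
      rw [h]; simp
  have key2 := Finset.sum_prod_piFinset (ι := Fin L) (Finset.univ : Finset Bool)
    (fun (x : Fin L) (b : Bool) =>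
      if x = x0 then (if b then 0 else q) else (if b then (1 - q) else q))
  rw [Fintype.piFinset_univ] at key2
  rw [Finset.sum_congr rfl (fun σ _ => key σ), key2]
  have : ∀ x : Fin L, (∑ b : Bool, (fun (x : Fin L) (b : Bool) =>
      if x = x0 then (if b then 0 else q) else (if b then (1 - q) else q)) x b)
      = if x = x0 then q else 1 := by
    intro x
    by_cases hx : x = x0 <;> simp [hx] <;> ring
  rw [Finset.prod_congr rfl (fun x _ => this x)]
  simp

lemma weight_oneZero (hL : 0 < L) :
    weight L q (oneZero L) = q * (1 - q) ^ (L - 1) := by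
  unfold weight oneZero
  have key : ∀ x : Fin L, (if (decide (x.val + 1 ≠ L)) = true then (1 - q) else q)
      = if x = lastSite L hL then q else (1 - q) := by
    intro x
    by_cases hx : x = lastSite L hL
    · subst hx; rw [if_pos rfl]; simp [lastSite_val hL]
    · rw [if_neg hx]
      have : x.val + 1 ≠ L := by
        intro hc
        exact hx (Fin.ext (by have := lastSite_val hL; omega))
      simp [this]
  rw [Finset.prod_congr rfl (fun x _ => key x)]
  rw [← Finset.mul_prod_erase Finset.univ _ (Finset.mem_univ (lastSite L hL))]
  rw [if_pos rfl]
  congr 1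
  rw [Finset.prod_congr rfl (fun y hy => if_neg (Finset.ne_of_mem_erase hy))]
  rw [Finset.prod_const]
  congr 1
  rw [Finset.card_erase_of_mem (Finset.mem_univ _), Finset.card_univ, Fintype.card_fin]

lemma oneZero_not_mem_lastOneSet (hL : 0 < L) : oneZero L ∉ lastOneSet L := by
  rw [not_mem_lastOneSet_iff hL]
  unfold oneZero
  simp [lastSite_val hL]

lemma allOnes_mem_lastOneSet : allOnes L ∈ lastOneSet L := fun _ _ => rfl

end AuxMeasure

open Matrix

section AuxSub

variable {L : ℕ} {q : ℝ}

lemma K_apply_sum (f : Cfg L → ℝ) (σ : Cfg L) :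
    ∑ η : Cfg L, K L q σ η * f η = gen L q f σ := by
  unfold K
  have hsplit : ∀ η : Cfg L,
      ((∑ x : Fin L, if η = flip L σ x then rate L q σ x else 0)
        - (if η = σ then ∑ x : Fin L, rate L q σ x else 0)) * f η
      = (∑ x : Fin L, (if η = flip L σ x then rate L q σ x * f η else 0))
        - (if η = σ then (∑ x : Fin L, rate L q σ x) * f σ else 0) := by
    intro η
    rw [sub_mul, Finset.sum_mul]
    congr 1
    · apply Finset.sum_congr rfl
      intro x _
      split <;> simp
    · split
      · next h => rw [h]
      · simp
  rw [Finset.sum_congr rfl (fun η _ => hsplit η), Finset.sum_sub_distrib]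
  have h1 : (∑ η : Cfg L, ∑ x : Fin L, (if η = flip L σ x then rate L q σ x * f η else 0))
      = ∑ x : Fin L, rate L q σ x * f (flip L σ x) := by
    rw [Finset.sum_comm]
    apply Finset.sum_congr rfl
    intro x _
    rw [Finset.sum_ite_eq' Finset.univ (flip L σ x) (fun η => rate L q σ x * f η)]
    simp
  have h2 : (∑ η : Cfg L, (if η = σ then (∑ x : Fin L, rate L q σ x) * f σ else 0))
      = (∑ x : Fin L, rate L q σ x) * f σ := by
    rw [Finset.sum_ite_eq' Finset.univ σ (fun _ => (∑ x : Fin L, rate L q σ x) * f σ)]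
    simp
  rw [h1, h2, gen_eq, Finset.sum_mul, ← Finset.sum_sub_distrib]
  apply Finset.sum_congr rfl
  intro x _
  ring

/-- Extension of a function on a subtype by zero. -/
def extFun (L : ℕ) (P : Cfg L → Prop) [DecidablePred P]
    (v : {σ : Cfg L // P σ} → ℝ) : Cfg L → ℝ :=
  fun σ => if h : P σ then v ⟨σ, h⟩ else 0

/-- The sub-matrix of `K` restricted to configurations satisfying `P`. -/
def subK (L : ℕ) (q : ℝ) (P : Cfg L → Prop) :
    Matrix {σ : Cfg L // P σ} {σ : Cfg L // P σ} ℝ :=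
  fun a b => K L q a.1 b.1

variable {P : Cfg L → Prop} [DecidablePred P] [Fintype {σ : Cfg L // P σ}]

lemma sum_subtype_eq (F : Cfg L → ℝ) (hF : ∀ σ, ¬ P σ → F σ = 0) :
    ∑ a : {σ : Cfg L // P σ}, F a.1 = ∑ σ : Cfg L, F σ := by
  rw [← Finset.sum_filter_add_sum_filter_not Finset.univ P F]
  have h2 : ∑ σ ∈ Finset.univ.filter (fun σ => ¬ P σ), F σ = 0 :=
    Finset.sum_eq_zero (fun σ hσ => hF σ (Finset.mem_filter.1 hσ).2)
  rw [h2, add_zero]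
  exact (Finset.sum_subtype (Finset.univ.filter P)
    (fun σ => by simp [Finset.mem_filter]) F).symm

lemma mulVec_subK (v : {σ : Cfg L // P σ} → ℝ) (a : {σ : Cfg L // P σ}) :
    (subK L q P *ᵥ v) a = gen L q (extFun L P v) a.1 := by
  rw [← K_apply_sum]
  have : (subK L q P *ᵥ v) a = ∑ b : {σ : Cfg L // P σ}, K L q a.1 b.1 * v b := rfl
  rw [this]
  rw [← sum_subtype_eq (P := P) (fun η => K L q a.1 η * extFun L P v η)
    (fun σ hσ => by unfold extFun; rw [dif_neg hσ, mul_zero])]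
  apply Finset.sum_congr rfl
  intro b _
  congr 1
  unfold extFun
  rw [dif_pos b.2]

lemma quad_subK (hq0 : 0 < q) (hq1 : q < 1) (v : {σ : Cfg L // P σ} → ℝ) :
    ∑ a : {σ : Cfg L // P σ}, weight L q a.1 * (v a * (-(subK L q P *ᵥ v) a))
      = dirichlet L q (extFun L P v) := by
  unfold dirichlet mean
  rw [← sum_subtype_eq (P := P)
    (fun σ => weight L q σ * (extFun L P v σ * (-(gen L q (extFun L P v) σ))))
    (fun σ hσ => by unfold extFun; rw [dif_neg hσ]; ring)]
  apply Finset.sum_congr rfl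
  intro b _
  rw [mulVec_subK]
  congr 2
  unfold extFun
  rw [dif_pos b.2]

lemma exists_subK_solution (hq0 : 0 < q) (hq1 : q < 1) (hex : ∃ σ0 : Cfg L, ¬ P σ0)
    (rhs : {σ : Cfg L // P σ} → ℝ) : ∃ v, subK L q P *ᵥ v = rhs := by
  have hker : ∀ v : {σ : Cfg L // P σ} → ℝ, (subK L q P).mulVecLin v = 0 → v = 0 := by
    intro v hv
    rw [Matrix.mulVecLin_apply] at hv
    have h0 : dirichlet L q (extFun L P v) = 0 := by
      rw [← quad_subK hq0 hq1, hv]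
      simp
    have hconst := const_of_dirichlet_zero hq0 hq1 h0
    obtain ⟨σ0, hσ0⟩ := hex
    funext a
    have h1 : extFun L P v a.1 = v a := by unfold extFun; rw [dif_pos a.2]
    have h2 : extFun L P v σ0 = 0 := by unfold extFun; rw [dif_neg hσ0]
    have := hconst a.1 σ0
    rw [h1, h2] at this
    simp [this]
  have hinj : Function.Injective (subK L q P).mulVecLin := by
    rw [← LinearMap.ker_eq_bot]
    exact LinearMap.ker_eq_bot'.2 hker
  obtain ⟨v, hv⟩ := LinearMap.surjective_of_injective hinj rhs
  exact ⟨v, by rw [← Matrix.mulVecLin_apply]; exact hv⟩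

end AuxSub

section AuxBilin

variable {L : ℕ} {q : ℝ}

lemma Dform_add_left (f g h : Cfg L → ℝ) :
    Dform L q (f + g) h = Dform L q f h + Dform L q g h := by
  unfold Dform
  rw [← Finset.sum_add_distrib]
  apply Finset.sum_congr rfl
  intro σ _
  simp only [Pi.add_apply]
  ring

lemma Dform_add_right (f g h : Cfg L → ℝ) :
    Dform L q f (g + h) = Dform L q f g + Dform L q f h := by
  unfold Dform
  rw [← Finset.sum_add_distrib]
  apply Finset.sum_congr rfl
  intro σ _
  rw [gen_add]
  ring

lemma dirichlet_add_expand (f g : Cfg L → ℝ) :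
    dirichlet L q (f + g) = dirichlet L q f + 2 * Dform L q g f + dirichlet L q g := by
  rw [dirichlet_eq_Dform, dirichlet_eq_Dform, dirichlet_eq_Dform,
    Dform_add_left, Dform_add_right, Dform_add_right]
  have := Dform_symm (L := L) (q := q) f g
  linarith

/-- Clamp a real number to `[0,1]`. -/
def clamp (r : ℝ) : ℝ := max 0 (min 1 r)

lemma clamp_one : clamp 1 = 1 := by unfold clamp; norm_num

lemma clamp_zero : clamp 0 = 0 := by unfold clamp; norm_num

lemma clamp_nonneg (r : ℝ) : 0 ≤ clamp r := le_max_left _ _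

lemma clamp_le_one (r : ℝ) : clamp r ≤ 1 := by
  unfold clamp
  apply max_le (by norm_num) (min_le_left _ _)

lemma clamp_lipschitz (x y : ℝ) : |clamp x - clamp y| ≤ |x - y| := by
  unfold clamp
  rw [max_comm 0 (min 1 x), max_comm 0 (min 1 y)]
  calc |max (min 1 x) 0 - max (min 1 y) 0| ≤ |min 1 x - min 1 y| :=
        abs_max_sub_max_le_abs _ _ _
    _ ≤ max |1 - 1| |x - y| := abs_min_sub_min_le_max 1 x 1 y
    _ = |x - y| := by rw [sub_self, abs_zero]; exact max_eq_right (abs_nonneg _)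

lemma dirichlet_clamp_le (hq0 : 0 < q) (hq1 : q < 1) (f : Cfg L → ℝ) :
    dirichlet L q (fun σ => clamp (f σ)) ≤ dirichlet L q f := by
  rw [dirichlet_eq_half, dirichlet_eq_half]
  apply mul_le_mul_of_nonneg_left _ (by norm_num)
  apply Finset.sum_le_sum
  intro σ _
  apply Finset.sum_le_sum
  intro x _
  apply mul_le_mul_of_nonneg_left _
    (mul_nonneg (weight_pos hq0 hq1 σ).le (rate_nonneg hq0 hq1 σ x))
  have hlip := clamp_lipschitz (f (flip L σ x)) (f σ)
  calc (clamp (f (flip L σ x)) - clamp (f σ)) * (clamp (f (flip L σ x)) - clamp (f σ))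
      = |clamp (f (flip L σ x)) - clamp (f σ)| * |clamp (f (flip L σ x)) - clamp (f σ)| := by
        rw [← abs_mul, abs_mul_self]
    _ ≤ |f (flip L σ x) - f σ| * |f (flip L σ x) - f σ| :=
        mul_le_mul hlip hlip (abs_nonneg _) (abs_nonneg _)
    _ = (f (flip L σ x) - f σ) * (f (flip L σ x) - f σ) := by
        rw [← abs_mul, abs_mul_self]

end AuxBilin

section AuxCap

open Matrix

variable {L : ℕ} {q : ℝ}

theorem exists_fstar (hq0 : 0 < q) (hq1 : q < 1) (hL : 0 < L) :
    ∃ fstar : Cfg L → ℝ,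
      fstar (oneZero L) = 1 ∧
      (∀ σ ∈ lastOneSet L, fstar σ = 0) ∧
      (∀ σ, σ ∉ lastOneSet L → σ ≠ oneZero L → gen L q fstar σ = 0) ∧
      (∀ σ, 0 ≤ fstar σ ∧ fstar σ ≤ 1) ∧
      capacity L q (oneZero L) (lastOneSet L) = dirichlet L q fstar := by
  classical
  set a := oneZero L with ha_def
  have haB : a ∉ lastOneSet L := oneZero_not_mem_lastOneSet hL
  set P' : Cfg L → Prop := fun σ => σ ∉ lastOneSet L ∧ σ ≠ a with hP'_def
  letI : Fintype {σ : Cfg L // P' σ} := Fintype.ofFinite _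
  set ea : Cfg L → ℝ := fun σ => if σ = a then 1 else 0 with hea_def
  have hex : ∃ σ0 : Cfg L, ¬ P' σ0 :=
    ⟨allOnes L, fun h => h.1 allOnes_mem_lastOneSet⟩
  obtain ⟨h, hh⟩ := exists_subK_solution (P := P') hq0 hq1 hex
    (fun σ => -(gen L q ea σ.1))
  set fstar : Cfg L → ℝ := fun σ => ea σ + extFun L P' h σ with hfstar_def
  -- pointwise values
  have hext_a : extFun L P' h a = 0 := by
    unfold extFun; rw [dif_neg (fun hc => hc.2 rfl)]
  have hfa : fstar a = 1 := by
    rw [hfstar_def]; dsimp only; rw [hext_a, hea_def]; simp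
  have hfB : ∀ σ ∈ lastOneSet L, fstar σ = 0 := by
    intro σ hσ
    have h1 : ea σ = 0 := by
      have hne : σ ≠ a := fun hc => haB (hc ▸ hσ)
      rw [hea_def]; dsimp only
      rw [if_neg hne]
    have h2 : extFun L P' h σ = 0 := by
      unfold extFun; rw [dif_neg (fun hc => hc.1 hσ)]
    rw [hfstar_def]; dsimp only; rw [h1, h2, add_zero]
  -- harmonicity
  have hharm : ∀ σ, σ ∉ lastOneSet L → σ ≠ a → gen L q fstar σ = 0 := by
    intro σ hσB hσa
    have hP : P' σ := ⟨hσB, hσa⟩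
    have hsum : gen L q fstar σ = gen L q ea σ + gen L q (extFun L P' h) σ := by
      have : fstar = ea + extFun L P' h := rfl
      rw [this, gen_add]
    have hgen : gen L q (extFun L P' h) σ = (subK L q P' *ᵥ h) ⟨σ, hP⟩ :=
      (mulVec_subK h ⟨σ, hP⟩).symm
    have hval : (subK L q P' *ᵥ h) ⟨σ, hP⟩ = -(gen L q ea σ) := by
      rw [hh]
    rw [hsum, hgen, hval]; ring
  -- the constraint set for the capacity
  set capset : Set ℝ := {r : ℝ | ∃ f : Cfg L → ℝ, f a = 1 ∧
    (∀ σ ∈ lastOneSet L, f σ = 0) ∧ r = dirichlet L q f} with hcapset_def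
  have hmem : dirichlet L q fstar ∈ capset := ⟨fstar, hfa, hfB, rfl⟩
  have hbdd : ∀ r ∈ capset, (0:ℝ) ≤ r := by
    rintro r ⟨f, -, -, rfl⟩
    exact dirichlet_nonneg hq0 hq1 f
  -- the key minimality estimate
  have hmin : ∀ f : Cfg L → ℝ, f a = 1 → (∀ σ ∈ lastOneSet L, f σ = 0) →
      dirichlet L q fstar ≤ dirichlet L q f ∧
      (dirichlet L q f = dirichlet L q fstar →
        dirichlet L q (fun σ => f σ - fstar σ) = 0) := by
    intro f hfa' hfB'
    set d : Cfg L → ℝ := fun σ => f σ - fstar σ with hd_def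
    have hfd : f = fstar + d := by funext σ; simp [hd_def]
    have hD0 : Dform L q d fstar = 0 := by
      unfold Dform
      apply Finset.sum_eq_zero
      intro σ _
      by_cases hσB : σ ∈ lastOneSet L
      · have : d σ = 0 := by rw [hd_def]; dsimp only; rw [hfB' σ hσB, hfB σ hσB]; ring
        rw [this]; ring
      · by_cases hσa : σ = a
        · have : d σ = 0 := by rw [hd_def]; dsimp only; rw [hσa, hfa', hfa]; ring
          rw [this]; ring
        · rw [hharm σ hσB hσa]; ring
    have hexp : dirichlet L q f = dirichlet L q fstar + dirichlet L q d := by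
      rw [hfd, dirichlet_add_expand, hD0]; ring
    constructor
    · rw [hexp]
      have := dirichlet_nonneg hq0 hq1 d
      linarith
    · intro heq
      rw [hexp] at heq
      linarith
  -- capacity = dirichlet fstar
  have hcap : capacity L q a (lastOneSet L) = dirichlet L q fstar := by
    unfold capacity
    apply le_antisymm
    · exact csInf_le ⟨0, fun r hr => hbdd r hr⟩ hmem
    · apply le_csInf ⟨_, hmem⟩
      rintro r ⟨f, hf1, hf2, rfl⟩
      exact (hmin f hf1 hf2).1
  -- pointwise bounds via clamping
  have hbounds : ∀ σ, 0 ≤ fstar σ ∧ fstar σ ≤ 1 := by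
    set g : Cfg L → ℝ := fun σ => clamp (fstar σ) with hg_def
    have hga : g a = 1 := by rw [hg_def]; dsimp only; rw [hfa, clamp_one]
    have hgB : ∀ σ ∈ lastOneSet L, g σ = 0 := by
      intro σ hσ; rw [hg_def]; dsimp only; rw [hfB σ hσ, clamp_zero]
    have hle : dirichlet L q g ≤ dirichlet L q fstar := dirichlet_clamp_le hq0 hq1 fstar
    have hge := (hmin g hga hgB).1
    have heq : dirichlet L q g = dirichlet L q fstar := le_antisymm hle hge
    have hzero := (hmin g hga hgB).2 heq
    have hconst := const_of_dirichlet_zero hq0 hq1 hzero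
    have hgf : ∀ σ, g σ = fstar σ := by
      intro σ
      have := hconst σ a
      rw [hga, hfa] at this
      linarith
    intro σ
    rw [← hgf σ, hg_def]
    exact ⟨clamp_nonneg _, clamp_le_one _⟩
  exact ⟨fstar, hfa, hfB, hharm, hbounds, hcap⟩

end AuxCap

section AuxDeriv

open Matrix

variable {n : Type*} [Fintype n] [DecidableEq n]

lemma hasDerivAt_exp_entry (M : Matrix n n ℝ) (t : ℝ) (i j : n) :
    HasDerivAt (fun s : ℝ => NormedSpace.exp (s • M) i j)
      ((M * NormedSpace.exp (t • M)) i j) t := by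
  letI : SeminormedRing (Matrix n n ℝ) := Matrix.linftyOpSemiNormedRing
  letI : NormedRing (Matrix n n ℝ) := Matrix.linftyOpNormedRing
  letI : NormedAlgebra ℝ (Matrix n n ℝ) := Matrix.linftyOpNormedAlgebra
  haveI : CompleteSpace (Matrix n n ℝ) := FiniteDimensional.complete ℝ _
  have h := hasDerivAt_exp_smul_const' (𝕂 := ℝ) (𝔸 := Matrix n n ℝ) M t
  let l : Matrix n n ℝ →ₗ[ℝ] ℝ :=
    { toFun := fun A => A i j, map_add' := fun _ _ => rfl, map_smul' := fun _ _ => rfl }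
  let lc : Matrix n n ℝ →L[ℝ] ℝ := ⟨l, l.continuous_of_finiteDimensional⟩
  exact lc.hasFDerivAt.comp_hasDerivAt t h

lemma hasDerivAt_exp_mulVec (M : Matrix n n ℝ) (v : n → ℝ) (i : n) (t : ℝ) :
    HasDerivAt (fun s : ℝ => (NormedSpace.exp (s • M) *ᵥ v) i)
      ((M *ᵥ (NormedSpace.exp (t • M) *ᵥ v)) i) t := by
  have hsum : HasDerivAt (fun s : ℝ => ∑ j : n, NormedSpace.exp (s • M) i j * v j)
      (∑ j : n, (M * NormedSpace.exp (t • M)) i j * v j) t :=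
    HasDerivAt.fun_sum (fun j _ => (hasDerivAt_exp_entry M t i j).mul_const (v j))
  have h2 : (M *ᵥ (NormedSpace.exp (t • M) *ᵥ v)) i
      = ∑ j : n, (M * NormedSpace.exp (t • M)) i j * v j := by
    rw [Matrix.mulVec_mulVec]
    rfl
  rw [h2]
  exact hsum

lemma continuous_exp_mulVec (M : Matrix n n ℝ) (v : n → ℝ) (i : n) :
    Continuous (fun s : ℝ => (NormedSpace.exp (s • M) *ᵥ v) i) :=
  continuous_iff_continuousAt.2 fun t => (hasDerivAt_exp_mulVec M v i t).continuousAt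

lemma exp_mulVec_commute (M : Matrix n n ℝ) (v : n → ℝ) (t : ℝ) :
    M *ᵥ (NormedSpace.exp (t • M) *ᵥ v) = NormedSpace.exp (t • M) *ᵥ (M *ᵥ v) := by
  letI : SeminormedRing (Matrix n n ℝ) := Matrix.linftyOpSemiNormedRing
  letI : NormedRing (Matrix n n ℝ) := Matrix.linftyOpNormedRing
  letI : NormedAlgebra ℝ (Matrix n n ℝ) := Matrix.linftyOpNormedAlgebra
  haveI : CompleteSpace (Matrix n n ℝ) := FiniteDimensional.complete ℝ _
  have hc : Commute M (t • M) := (Commute.refl M).smul_right t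
  rw [Matrix.mulVec_mulVec, Matrix.mulVec_mulVec, hc.exp_right.eq]

lemma exp_zero_mulVec (M : Matrix n n ℝ) (v : n → ℝ) :
    NormedSpace.exp ((0:ℝ) • M) *ᵥ v = v := by
  rw [zero_smul, NormedSpace.exp_zero, Matrix.one_mulVec]

end AuxDeriv

section AuxDecay

open Matrix

variable {L : ℕ} {q : ℝ} {P : Cfg L → Prop} [DecidablePred P] [Fintype {σ : Cfg L // P σ}]

/-- The `π`-weighted inner product on functions on the subtype. -/
def subIP (L : ℕ) (q : ℝ) (P : Cfg L → Prop) [Fintype {σ : Cfg L // P σ}]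
    (v w : {σ : Cfg L // P σ} → ℝ) : ℝ :=
  ∑ a : {σ : Cfg L // P σ}, weight L q a.1 * (v a * w a)

/-- The quadratic form of `-subK`. -/
def subQF (L : ℕ) (q : ℝ) (P : Cfg L → Prop) [Fintype {σ : Cfg L // P σ}]
    (v : {σ : Cfg L // P σ} → ℝ) : ℝ :=
  ∑ a : {σ : Cfg L // P σ}, weight L q a.1 * (v a * (-(subK L q P *ᵥ v) a))

lemma subIP_nonneg (hq0 : 0 < q) (hq1 : q < 1) (v : {σ : Cfg L // P σ} → ℝ) :
    0 ≤ subIP L q P v v :=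
  Finset.sum_nonneg fun a _ =>
    mul_nonneg (weight_pos hq0 hq1 a.1).le (mul_self_nonneg _)

lemma subIP_single_le (hq0 : 0 < q) (hq1 : q < 1) (v : {σ : Cfg L // P σ} → ℝ)
    (a : {σ : Cfg L // P σ}) :
    weight L q a.1 * (v a * v a) ≤ subIP L q P v v :=
  Finset.single_le_sum
    (fun b _ => mul_nonneg (weight_pos hq0 hq1 b.1).le (mul_self_nonneg _))
    (Finset.mem_univ a)

lemma subIP_smul (c : ℝ) (v : {σ : Cfg L // P σ} → ℝ) :
    subIP L q P (c • v) (c • v) = c^2 * subIP L q P v v := by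
  unfold subIP
  rw [Finset.mul_sum]
  apply Finset.sum_congr rfl
  intro a _
  simp only [Pi.smul_apply, smul_eq_mul]
  ring

lemma subQF_smul (c : ℝ) (v : {σ : Cfg L // P σ} → ℝ) :
    subQF L q P (c • v) = c^2 * subQF L q P v := by
  unfold subQF
  rw [Matrix.mulVec_smul, Finset.mul_sum]
  apply Finset.sum_congr rfl
  intro a _
  simp only [Pi.smul_apply, smul_eq_mul]
  ring

lemma subQF_eq_dirichlet (hq0 : 0 < q) (hq1 : q < 1) (v : {σ : Cfg L // P σ} → ℝ) :
    subQF L q P v = dirichlet L q (extFun L P v) :=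
  quad_subK hq0 hq1 v

lemma subQF_nonneg (hq0 : 0 < q) (hq1 : q < 1) (v : {σ : Cfg L // P σ} → ℝ) :
    0 ≤ subQF L q P v := by
  rw [subQF_eq_dirichlet hq0 hq1]
  exact dirichlet_nonneg hq0 hq1 _

lemma eq_zero_of_subQF_eq_zero (hq0 : 0 < q) (hq1 : q < 1)
    (hex : ∃ σ0 : Cfg L, ¬ P σ0) {v : {σ : Cfg L // P σ} → ℝ}
    (hv : subQF L q P v = 0) : v = 0 := by
  rw [subQF_eq_dirichlet hq0 hq1] at hv
  have hconst := const_of_dirichlet_zero hq0 hq1 hv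
  obtain ⟨σ0, hσ0⟩ := hex
  funext a
  have h1 : extFun L P v a.1 = v a := by unfold extFun; rw [dif_pos a.2]
  have h2 : extFun L P v σ0 = 0 := by unfold extFun; rw [dif_neg hσ0]
  have := hconst a.1 σ0
  rw [h1, h2] at this
  simpa using this

lemma continuous_subIP : Continuous (fun v : {σ : Cfg L // P σ} → ℝ => subIP L q P v v) := by
  apply continuous_finset_sum
  intro a _
  exact continuous_const.mul ((continuous_apply a).mul (continuous_apply a))

lemma continuous_subQF : Continuous (fun v : {σ : Cfg L // P σ} → ℝ => subQF L q P v) := by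
  apply continuous_finset_sum
  intro a _
  apply continuous_const.mul
  apply (continuous_apply a).mul
  apply Continuous.neg
  have : (fun v : {σ : Cfg L // P σ} → ℝ => (subK L q P *ᵥ v) a)
      = fun v => ∑ b : {σ : Cfg L // P σ}, subK L q P a b * v b := rfl
  rw [this]
  exact continuous_finset_sum _ fun b _ => continuous_const.mul (continuous_apply b)

lemma subIP_pos_of_ne_zero (hq0 : 0 < q) (hq1 : q < 1) {v : {σ : Cfg L // P σ} → ℝ}
    (hv : v ≠ 0) : 0 < subIP L q P v v := by
  rcases Function.ne_iff.1 hv with ⟨a, ha⟩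
  have h1 : 0 < weight L q a.1 * (v a * v a) := by
    apply mul_pos (weight_pos hq0 hq1 a.1)
    have : v a ≠ 0 := by simpa using ha
    exact mul_self_pos.2 this
  exact lt_of_lt_of_le h1 (subIP_single_le hq0 hq1 v a)

/-- Spectral gap for the killed generator. -/
lemma exists_gap (hq0 : 0 < q) (hq1 : q < 1) (hex : ∃ σ0 : Cfg L, ¬ P σ0)
    [Nonempty {σ : Cfg L // P σ}] :
    ∃ lam : ℝ, 0 < lam ∧ ∀ v : {σ : Cfg L // P σ} → ℝ,
      lam * subIP L q P v v ≤ subQF L q P v := by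
  classical
  set T : Set ({σ : Cfg L // P σ} → ℝ) := {v | subIP L q P v v = 1} with hT_def
  have hT_closed : IsClosed T := isClosed_eq continuous_subIP continuous_const
  -- boundedness
  have hne' : (Finset.univ : Finset {σ : Cfg L // P σ}).Nonempty := Finset.univ_nonempty
  set wmin : ℝ := Finset.univ.inf' hne' (fun a : {σ : Cfg L // P σ} => weight L q a.1)
    with hwmin_def
  have hwmin_pos : 0 < wmin := by
    rw [hwmin_def]
    obtain ⟨b, _, hb⟩ := Finset.exists_mem_eq_inf' hne'
      (fun a : {σ : Cfg L // P σ} => weight L q a.1)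
    rw [hb]
    exact weight_pos hq0 hq1 b.1
  have hwmin_le : ∀ a : {σ : Cfg L // P σ}, wmin ≤ weight L q a.1 :=
    fun a => Finset.inf'_le _ (Finset.mem_univ a)
  have hT_bounded : Bornology.IsBounded T := by
    rw [isBounded_iff_forall_norm_le]
    refine ⟨Real.sqrt (1 / wmin), fun v hv => ?_⟩
    have hR : (0:ℝ) ≤ Real.sqrt (1 / wmin) := Real.sqrt_nonneg _
    rw [pi_norm_le_iff_of_nonneg hR]
    intro a
    rw [Real.norm_eq_abs, ← Real.sqrt_sq_eq_abs]
    apply Real.sqrt_le_sqrt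
    have h1 : weight L q a.1 * (v a * v a) ≤ 1 := by
      have hvT : subIP L q P v v = 1 := hv
      rw [← hvT]
      exact subIP_single_le hq0 hq1 v a
    have h2 : wmin * (v a * v a) ≤ 1 :=
      le_trans (mul_le_mul_of_nonneg_right (hwmin_le a) (mul_self_nonneg _)) h1
    rw [sq, le_div_iff₀ hwmin_pos]
    linarith
  have hT_compact : IsCompact T := Metric.isCompact_of_isClosed_isBounded hT_closed hT_bounded
  -- nonemptiness
  have hT_ne : T.Nonempty := by
    obtain ⟨a0⟩ := ‹Nonempty {σ : Cfg L // P σ}›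
    set s : ℝ := Real.sqrt (weight L q a0.1) with hs_def
    have hs_pos : 0 < s := Real.sqrt_pos.2 (weight_pos hq0 hq1 a0.1)
    set v : {σ : Cfg L // P σ} → ℝ := fun a => if a = a0 then s⁻¹ else 0 with hv_def
    refine ⟨v, ?_⟩
    show subIP L q P v v = 1
    unfold subIP
    have hsum := Finset.sum_eq_single_of_mem
      (f := fun a : {σ : Cfg L // P σ} => weight L q a.1 * (v a * v a)) a0
      (Finset.mem_univ a0)
      (fun b _ hb => by
        have : v b = 0 := by rw [hv_def]; dsimp only; rw [if_neg hb]
        rw [this]; ring)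
    rw [hsum]
    have hva0 : v a0 = s⁻¹ := by rw [hv_def]; dsimp only; rw [if_pos rfl]
    have hss : s * s = weight L q a0.1 := Real.mul_self_sqrt (weight_pos hq0 hq1 a0.1).le
    rw [hva0, ← hss]
    field_simp
  obtain ⟨v1, hv1T, hv1min⟩ := hT_compact.exists_isMinOn hT_ne
    (continuous_subQF.continuousOn)
  set lam : ℝ := subQF L q P v1 with hlam_def
  have hlam_pos : 0 < lam := by
    rcases lt_or_eq_of_le (subQF_nonneg hq0 hq1 v1) with h | h
    · exact h
    · exfalso
      have hv10 : v1 = 0 := eq_zero_of_subQF_eq_zero hq0 hq1 hex h.symm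
      have : subIP L q P v1 v1 = 1 := hv1T
      rw [hv10] at this
      unfold subIP at this
      simp at this
  refine ⟨lam, hlam_pos, fun v => ?_⟩
  by_cases hv : v = 0
  · subst hv
    have h1 : subIP L q P (0 : {σ : Cfg L // P σ} → ℝ) 0 = 0 := by
      unfold subIP; simp
    have h2 : subQF L q P (0 : {σ : Cfg L // P σ} → ℝ) = 0 := by
      unfold subQF; simp
    rw [h1, h2, mul_zero]
  · set s : ℝ := Real.sqrt (subIP L q P v v) with hs_def
    have hip_pos : 0 < subIP L q P v v := subIP_pos_of_ne_zero hq0 hq1 hv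
    have hs_pos : 0 < s := Real.sqrt_pos.2 hip_pos
    have hs_sq : s^2 = subIP L q P v v := Real.sq_sqrt hip_pos.le
    have hmemT : (s⁻¹ • v) ∈ T := by
      show subIP L q P _ _ = 1
      rw [subIP_smul, ← hs_sq]
      field_simp
    have hmin := hv1min hmemT
    have : lam ≤ subQF L q P (s⁻¹ • v) := hmin
    rw [subQF_smul] at this
    have hexp : (s⁻¹)^2 = (subIP L q P v v)⁻¹ := by
      rw [inv_pow, hs_sq]
    rw [hexp] at this
    calc lam * subIP L q P v v ≤ ((subIP L q P v v)⁻¹ * subQF L q P v) * subIP L q P v v :=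
          mul_le_mul_of_nonneg_right this hip_pos.le
      _ = subQF L q P v := by field_simp
  
end AuxDecay

section AuxGronwall

open Matrix

variable {L : ℕ} {q : ℝ} {P : Cfg L → Prop} [DecidablePred P] [Fintype {σ : Cfg L // P σ}]

lemma exp_decay_bound (hq0 : 0 < q) (hq1 : q < 1) (hex : ∃ σ0 : Cfg L, ¬ P σ0)
    [Nonempty {σ : Cfg L // P σ}] :
    ∃ lam C : ℝ, 0 < lam ∧ 0 < C ∧ ∀ (v0 : {σ : Cfg L // P σ} → ℝ)
      (a : {σ : Cfg L // P σ}) (t : ℝ), 0 ≤ t →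
      |(NormedSpace.exp (t • subK L q P) *ᵥ v0) a| ≤
        C * Real.sqrt (subIP L q P v0 v0) * Real.exp (-lam * t) := by
  classical
  obtain ⟨lam, hlam, hgap⟩ := exists_gap hq0 hq1 hex
  have hne' : (Finset.univ : Finset {σ : Cfg L // P σ}).Nonempty := Finset.univ_nonempty
  set wmin : ℝ := Finset.univ.inf' hne' (fun a : {σ : Cfg L // P σ} => weight L q a.1)
    with hwmin_def
  have hwmin_pos : 0 < wmin := by
    rw [hwmin_def]
    obtain ⟨b, _, hb⟩ := Finset.exists_mem_eq_inf' hne'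
      (fun a : {σ : Cfg L // P σ} => weight L q a.1)
    rw [hb]
    exact weight_pos hq0 hq1 b.1
  have hwmin_le : ∀ a : {σ : Cfg L // P σ}, wmin ≤ weight L q a.1 :=
    fun a => Finset.inf'_le _ (Finset.mem_univ a)
  refine ⟨lam, Real.sqrt (1 / wmin), hlam, Real.sqrt_pos.2 (by positivity), ?_⟩
  intro v0 a t ht
  set M := subK L q P with hM_def
  set w : ℝ → {σ : Cfg L // P σ} → ℝ := fun s => NormedSpace.exp (s • M) *ᵥ v0 with hw_def
  set y : ℝ → ℝ := fun s => subIP L q P (w s) (w s) with hy_def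
  have hw_deriv : ∀ (s : ℝ) (b : {σ : Cfg L // P σ}),
      HasDerivAt (fun u => w u b) ((M *ᵥ w s) b) s := by
    intro s b
    exact hasDerivAt_exp_mulVec M v0 b s
  have hy_deriv : ∀ s : ℝ, HasDerivAt y (-2 * subQF L q P (w s)) s := by
    intro s
    have hterm : ∀ b ∈ (Finset.univ : Finset {σ : Cfg L // P σ}),
        HasDerivAt (fun u => weight L q b.1 * (w u b * w u b))
          (weight L q b.1 * ((M *ᵥ w s) b * w s b + w s b * (M *ᵥ w s) b)) s :=
      fun b _ => ((hw_deriv s b).mul (hw_deriv s b)).const_mul _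
    have hsum := HasDerivAt.fun_sum hterm
    have hfun : (fun u => ∑ b : {σ : Cfg L // P σ}, weight L q b.1 * (w u b * w u b)) = y := by
      funext u
      rw [hy_def]
      rfl
    rw [hfun] at hsum
    have hval : (∑ b : {σ : Cfg L // P σ},
        weight L q b.1 * ((M *ᵥ w s) b * w s b + w s b * (M *ᵥ w s) b))
        = -2 * subQF L q P (w s) := by
      unfold subQF
      rw [Finset.mul_sum]
      apply Finset.sum_congr rfl
      intro b _
      rw [← hM_def]
      ring
    rw [hval] at hsum
    exact hsum
  set z : ℝ → ℝ := fun s => y s * Real.exp (2 * lam * s) with hz_def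
  have hz_deriv : ∀ s : ℝ, HasDerivAt z
      ((-2 * subQF L q P (w s)) * Real.exp (2 * lam * s)
        + y s * (Real.exp (2 * lam * s) * (2 * lam))) s := by
    intro s
    have h1 : HasDerivAt (fun u : ℝ => 2 * lam * u) (2 * lam) s := by
      simpa using (hasDerivAt_id s).const_mul (2 * lam)
    have hexp : HasDerivAt (fun u : ℝ => Real.exp (2 * lam * u))
        (Real.exp (2 * lam * s) * (2 * lam)) s := (Real.hasDerivAt_exp _).comp s h1
    exact (hy_deriv s).mul hexp
  have hanti : AntitoneOn z (Set.Ici (0:ℝ)) := by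
    apply antitoneOn_of_deriv_nonpos (convex_Ici 0)
    · exact (continuous_iff_continuousAt.2 fun s => (hz_deriv s).continuousAt).continuousOn
    · intro s _
      exact (hz_deriv s).differentiableAt.differentiableWithinAt
    · intro s _
      rw [(hz_deriv s).deriv]
      have hg := hgap (w s)
      have hE := Real.exp_pos (2 * lam * s)
      have hy_eq : y s = subIP L q P (w s) (w s) := rfl
      nlinarith [hg, hE, mul_le_mul_of_nonneg_right hg hE.le]
  have hz_le : z t ≤ z 0 := hanti Set.self_mem_Ici ht ht
  have hw0 : w 0 = v0 := exp_zero_mulVec M v0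
  have hz0 : z 0 = subIP L q P v0 v0 := by
    rw [hz_def]
    dsimp only
    rw [mul_zero, Real.exp_zero, mul_one, hy_def]
    dsimp only
    rw [hw0]
  set Y0 := subIP L q P v0 v0 with hY0_def
  have hyt : y t ≤ Y0 * Real.exp (-(2 * lam) * t) := by
    have hE := Real.exp_pos (2 * lam * t)
    have h1 : y t * Real.exp (2 * lam * t) ≤ Y0 := by
      rw [← hz0]; exact hz_le
    have h2 : Real.exp (-(2 * lam) * t) = (Real.exp (2 * lam * t))⁻¹ := by
      rw [← Real.exp_neg]; ring_nf
    rw [h2, ← div_eq_mul_inv, le_div_iff₀ hE]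
    exact h1
  -- entry bound
  have hsingle : weight L q a.1 * (w t a * w t a) ≤ y t :=
    subIP_single_le hq0 hq1 (w t) a
  have hY0_nonneg : 0 ≤ Y0 := subIP_nonneg hq0 hq1 v0
  have hsq : (w t a)^2 ≤ (1 / wmin) * (Y0 * Real.exp (-(2 * lam) * t)) := by
    have h1 : wmin * (w t a * w t a) ≤ weight L q a.1 * (w t a * w t a) :=
      mul_le_mul_of_nonneg_right (hwmin_le a) (mul_self_nonneg _)
    have h2 : wmin * (w t a * w t a) ≤ Y0 * Real.exp (-(2 * lam) * t) :=
      le_trans h1 (le_trans hsingle hyt)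
    have h3 : (1 / wmin) * (Y0 * Real.exp (-(2 * lam) * t))
        = (Y0 * Real.exp (-(2 * lam) * t)) / wmin := by ring
    rw [sq, h3, le_div_iff₀ hwmin_pos]
    linarith
  calc |w t a| = Real.sqrt ((w t a)^2) := (Real.sqrt_sq_eq_abs _).symm
    _ ≤ Real.sqrt ((1 / wmin) * (Y0 * Real.exp (-(2 * lam) * t))) := Real.sqrt_le_sqrt hsq
    _ = Real.sqrt (1 / wmin) * (Real.sqrt Y0 * Real.sqrt (Real.exp (-(2 * lam) * t))) := by
        rw [Real.sqrt_mul (by positivity), Real.sqrt_mul hY0_nonneg]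
    _ = Real.sqrt (1 / wmin) * Real.sqrt Y0 * Real.exp (-lam * t) := by
        have : Real.exp (-(2 * lam) * t) = (Real.exp (-lam * t))^2 := by
          rw [sq, ← Real.exp_add]; ring_nf
        rw [this, Real.sqrt_sq (Real.exp_pos _).le]
        ring

end AuxGronwall

section Crux

open Matrix MeasureTheory

theorem Thit_bounds (L : ℕ) (q : ℝ) (hq0 : 0 < q) (hq1 : q < 1) (hL : 0 < L) :
    0 < capacity L q (oneZero L) (lastOneSet L) ∧
    q * (1 - q)^(L-1) / capacity L q (oneZero L) (lastOneSet L) ≤ Thit L q ∧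
    Thit L q ≤ q / capacity L q (oneZero L) (lastOneSet L) := by
  classical
  have haB : oneZero L ∉ lastOneSet L := oneZero_not_mem_lastOneSet hL
  letI instF : Fintype {σ : Cfg L // σ ∉ lastOneSet L} := Fintype.ofFinite _
  haveI hnonempty : Nonempty {σ : Cfg L // σ ∉ lastOneSet L} := ⟨⟨oneZero L, haB⟩⟩
  have hex : ∃ σ0 : Cfg L, ¬ (σ0 ∉ lastOneSet L) :=
    ⟨allOnes L, fun h => h allOnes_mem_lastOneSet⟩
  have hKsub : Ksub L q (lastOneSet L) = subK L q (fun σ => σ ∉ lastOneSet L) := rfl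
  set η : {σ : Cfg L // σ ∉ lastOneSet L} := ⟨oneZero L, haB⟩ with hη_def
  -- solve for the expected-hitting-time vector u
  obtain ⟨u, hu⟩ := exists_subK_solution (P := fun σ => σ ∉ lastOneSet L) hq0 hq1 hex
    (fun _ => (-1 : ℝ))
  -- survival probability formula
  have hsurv : ∀ t : ℝ, surv L q (lastOneSet L) (oneZero L) t
      = (NormedSpace.exp (t • Ksub L q (lastOneSet L)) *ᵥ (fun _ => (1:ℝ))) η := by
    intro t
    show (∑ p : {σ : Cfg L // σ ∉ lastOneSet L}, ∑ b : {σ : Cfg L // σ ∉ lastOneSet L},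
        if p.1 = oneZero L
          then NormedSpace.exp (t • Ksub L q (lastOneSet L)) p b else 0) = _
    have h1 : ∀ p : {σ : Cfg L // σ ∉ lastOneSet L},
        (∑ b : {σ : Cfg L // σ ∉ lastOneSet L},
          if p.1 = oneZero L then NormedSpace.exp (t • Ksub L q (lastOneSet L)) p b else 0)
        = if p = η then
            (∑ b : {σ : Cfg L // σ ∉ lastOneSet L},
              NormedSpace.exp (t • Ksub L q (lastOneSet L)) p b) else 0 := by
      intro p
      by_cases hp : p = η
      · rw [if_pos hp]
        apply Finset.sum_congr rfl
        intro b _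
        rw [if_pos (by rw [hp])]
      · rw [if_neg hp]
        apply Finset.sum_eq_zero
        intro b _
        rw [if_neg (fun hc => hp (Subtype.ext hc))]
    rw [Finset.sum_congr rfl (fun p _ => h1 p)]
    rw [Finset.sum_ite_eq' Finset.univ η]
    rw [if_pos (Finset.mem_univ η)]
    show _ = ∑ b : {σ : Cfg L // σ ∉ lastOneSet L},
      NormedSpace.exp (t • Ksub L q (lastOneSet L)) η b * 1
    apply Finset.sum_congr rfl
    intro b _
    rw [mul_one]
  -- decay bounds
  obtain ⟨lam, C, hlam, hC, hbound⟩ :=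
    exp_decay_bound (P := fun σ => σ ∉ lastOneSet L) hq0 hq1 hex
  -- the auxiliary function G
  set G : ℝ → ℝ := fun t => (NormedSpace.exp (t • Ksub L q (lastOneSet L)) *ᵥ u) η
    with hG_def
  have hG_deriv : ∀ t : ℝ, HasDerivAt G (-(surv L q (lastOneSet L) (oneZero L) t)) t := by
    intro t
    have h := hasDerivAt_exp_mulVec (Ksub L q (lastOneSet L)) u η t
    have heq : (Ksub L q (lastOneSet L) *ᵥ
        (NormedSpace.exp (t • Ksub L q (lastOneSet L)) *ᵥ u)) η
        = -(surv L q (lastOneSet L) (oneZero L) t) := by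
      rw [exp_mulVec_commute]
      rw [hKsub, hu]
      rw [show (fun _ : {σ : Cfg L // σ ∉ lastOneSet L} => (-1 : ℝ))
        = -(fun _ : {σ : Cfg L // σ ∉ lastOneSet L} => (1 : ℝ)) from rfl]
      rw [← hKsub, Matrix.mulVec_neg, hsurv t]
      rfl
    rw [heq] at h
    exact h
  -- continuity and integrability of the survival function
  have hsurv_cont : Continuous (fun t => surv L q (lastOneSet L) (oneZero L) t) := by
    rw [show (fun t => surv L q (lastOneSet L) (oneZero L) t)
      = fun t => (NormedSpace.exp (t • Ksub L q (lastOneSet L)) *ᵥ (fun _ => (1:ℝ))) η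
      from funext hsurv]
    exact continuous_exp_mulVec _ _ _
  set C1 : ℝ := C * Real.sqrt (subIP L q (fun σ => σ ∉ lastOneSet L)
    (fun _ => (1:ℝ)) (fun _ => (1:ℝ))) with hC1_def
  have hsurv_bound : ∀ t : ℝ, 0 ≤ t →
      |surv L q (lastOneSet L) (oneZero L) t| ≤ C1 * Real.exp (-lam * t) := by
    intro t ht
    rw [hsurv t]
    exact hbound _ η t ht
  set Cu : ℝ := C * Real.sqrt (subIP L q (fun σ => σ ∉ lastOneSet L) u u) with hCu_def
  have hG_bound : ∀ t : ℝ, 0 ≤ t → |G t| ≤ Cu * Real.exp (-lam * t) := by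
    intro t ht
    exact hbound u η t ht
  have hint : IntegrableOn (fun t => -(surv L q (lastOneSet L) (oneZero L) t))
      (Set.Ioi (0:ℝ)) := by
    apply Integrable.mono' (g := fun t => C1 * Real.exp (-lam * t))
    · exact ((exp_neg_integrableOn_Ioi 0 hlam).const_mul C1)
    · exact (hsurv_cont.neg).aestronglyMeasurable.restrict
    · apply (ae_restrict_mem measurableSet_Ioi).mono
      intro t ht
      rw [Real.norm_eq_abs, abs_neg]
      exact hsurv_bound t (le_of_lt ht)
  -- limit of G at infinity
  have htend : Filter.Tendsto G Filter.atTop (nhds 0) := by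
    have hbnd : ∀ᶠ t in Filter.atTop, ‖G t‖ ≤ Cu * Real.exp (-lam * t) := by
      filter_upwards [Filter.eventually_ge_atTop (0:ℝ)] with t ht
      rw [Real.norm_eq_abs]
      exact hG_bound t ht
    have h1 : Filter.Tendsto (fun t : ℝ => lam * t) Filter.atTop Filter.atTop :=
      Filter.Tendsto.const_mul_atTop hlam Filter.tendsto_id
    have h2 := Real.tendsto_exp_neg_atTop_nhds_zero.comp h1
    have h3 : (fun t : ℝ => Real.exp (-(lam * t))) = fun t => Real.exp (-lam * t) := by
      funext t; rw [neg_mul]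
    rw [show ((fun x => Real.exp (-x)) ∘ fun t : ℝ => lam * t)
      = fun t : ℝ => Real.exp (-(lam * t)) from rfl, h3] at h2
    have h4 : Filter.Tendsto (fun t : ℝ => Cu * Real.exp (-lam * t))
        Filter.atTop (nhds 0) := by
      have := h2.const_mul Cu
      simpa using this
    exact squeeze_zero_norm' hbnd h4
  -- FTC on [0, ∞)
  have hFTC := integral_Ioi_of_hasDerivAt_of_tendsto' (a := 0)
    (f := G) (f' := fun t => -(surv L q (lastOneSet L) (oneZero L) t))
    (fun t _ => hG_deriv t) hint htend
  have hG0 : G 0 = u η := by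
    rw [hG_def]
    dsimp only
    rw [exp_zero_mulVec]
  have hThit : Thit L q = u η := by
    show expHit L q (lastOneSet L) (oneZero L) = u η
    show (∫ t in Set.Ioi (0:ℝ), surv L q (lastOneSet L) (oneZero L) t) = u η
    have h1 : (∫ t in Set.Ioi (0:ℝ), surv L q (lastOneSet L) (oneZero L) t)
        = -(∫ t in Set.Ioi (0:ℝ), -(surv L q (lastOneSet L) (oneZero L) t)) := by
      rw [integral_neg, neg_neg]
    rw [h1, hFTC, hG0]
    ring
  -- capacity and the harmonic function
  obtain ⟨fstar, hfa, hfB, hharm, hbounds, hcap⟩ := exists_fstar hq0 hq1 hL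
  set N : ℝ := ∑ p : {σ : Cfg L // σ ∉ lastOneSet L}, weight L q p.1 * fstar p.1 with hN_def
  -- N = Dform fstar (ext u)
  have hN1 : Dform L q fstar (extFun L (fun σ => σ ∉ lastOneSet L) u) = N := by
    unfold Dform
    rw [← sum_subtype_eq (P := fun σ => σ ∉ lastOneSet L)
      (fun σ => weight L q σ *
        (fstar σ * (-(gen L q (extFun L (fun σ => σ ∉ lastOneSet L) u) σ))))
      (fun σ hσ => by
        rw [hfB σ (not_not.1 hσ)]
        ring)]
    apply Finset.sum_congr rfl
    intro p _
    have hgen : gen L q (extFun L (fun σ => σ ∉ lastOneSet L) u) p.1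
        = (subK L q (fun σ => σ ∉ lastOneSet L) *ᵥ u) p := (mulVec_subK u p).symm
    rw [hgen, hu]
    ring
  -- Dform (ext u) fstar = u η * dirichlet fstar
  have hgen_a : weight L q (oneZero L) * (1 * (-(gen L q fstar (oneZero L))))
      = dirichlet L q fstar := by
    unfold dirichlet mean
    have hsum := Finset.sum_eq_single_of_mem
      (f := fun σ : Cfg L => weight L q σ * (fstar σ * (-(gen L q fstar σ))))
      (oneZero L) (Finset.mem_univ _)
      (fun σ _ hσ => by
        by_cases hσB : σ ∈ lastOneSet L
        · rw [hfB σ hσB]; ring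
        · rw [hharm σ hσB hσ]; ring)
    rw [hsum]
    rw [hfa]
  have hN2 : Dform L q (extFun L (fun σ => σ ∉ lastOneSet L) u) fstar
      = u η * dirichlet L q fstar := by
    unfold Dform
    have hsum := Finset.sum_eq_single_of_mem
      (f := fun σ : Cfg L => weight L q σ *
        (extFun L (fun σ => σ ∉ lastOneSet L) u σ * (-(gen L q fstar σ))))
      (oneZero L) (Finset.mem_univ _)
      (fun σ _ hσ => by
        by_cases hσB : σ ∈ lastOneSet L
        · have h0 : extFun L (fun σ => σ ∉ lastOneSet L) u σ = 0 := by
            unfold extFun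
            rw [dif_neg (not_not.2 hσB)]
          rw [h0]
          ring
        · rw [hharm σ hσB hσ]
          ring)
    rw [hsum]
    have hext : extFun L (fun σ => σ ∉ lastOneSet L) u (oneZero L) = u η := by
      unfold extFun
      rw [dif_pos haB]
    rw [hext, ← hgen_a]
    ring
  have hNid : N = u η * dirichlet L q fstar := by
    rw [← hN1, Dform_symm, hN2]
  -- bounds on N
  have hwa : weight L q (oneZero L) = q * (1 - q)^(L-1) := weight_oneZero hL
  have hwa_pos : 0 < weight L q (oneZero L) := weight_pos hq0 hq1 _
  have hN_lower : weight L q (oneZero L) ≤ N := by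
    have := Finset.single_le_sum
      (f := fun p : {σ : Cfg L // σ ∉ lastOneSet L} => weight L q p.1 * fstar p.1)
      (fun p _ => mul_nonneg (weight_pos hq0 hq1 p.1).le (hbounds p.1).1)
      (Finset.mem_univ η)
    rw [hN_def]
    calc weight L q (oneZero L) = weight L q (oneZero L) * fstar (oneZero L) := by
          rw [hfa, mul_one]
      _ ≤ _ := this
  have hN_upper : N ≤ q := by
    have h1 : N ≤ ∑ p : {σ : Cfg L // σ ∉ lastOneSet L}, weight L q p.1 := by
      rw [hN_def]
      apply Finset.sum_le_sum
      intro p _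
      calc weight L q p.1 * fstar p.1 ≤ weight L q p.1 * 1 :=
            mul_le_mul_of_nonneg_left (hbounds p.1).2 (weight_pos hq0 hq1 p.1).le
        _ = weight L q p.1 := mul_one _
    have h2 : (∑ p : {σ : Cfg L // σ ∉ lastOneSet L}, weight L q p.1)
        = ∑ σ : Cfg L, (if σ ∉ lastOneSet L then weight L q σ else 0) := by
      rw [← sum_subtype_eq (P := fun σ => σ ∉ lastOneSet L)
        (fun σ => if σ ∉ lastOneSet L then weight L q σ else 0)
        (fun σ hσ => by rw [if_neg hσ])]
      apply Finset.sum_congr rfl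
      intro p _
      rw [if_pos p.2]
    have h3 : (∑ σ : Cfg L, (if σ ∉ lastOneSet L then weight L q σ else 0))
        = ∑ σ : Cfg L, (if σ (lastSite L hL) = false then weight L q σ else 0) := by
      apply Finset.sum_congr rfl
      intro σ _
      by_cases hσ : σ ∉ lastOneSet L
      · rw [if_pos hσ, if_pos ((not_mem_lastOneSet_iff hL σ).1 hσ)]
      · rw [if_neg hσ]
        rw [if_neg (fun hc => hσ ((not_mem_lastOneSet_iff hL σ).2 hc))]
    rw [h2, h3, sum_weight_lastFalse hL] at h1
    exact h1
  -- positivity of the capacity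
  have hdir_pos : 0 < dirichlet L q fstar := by
    rcases lt_or_eq_of_le (dirichlet_nonneg hq0 hq1 fstar) with h | h
    · exact h
    · exfalso
      have hN0 : N = 0 := by rw [hNid, ← h]; ring
      have := lt_of_lt_of_le hwa_pos hN_lower
      rw [hN0] at this
      exact lt_irrefl 0 this
  have hcap_pos : 0 < capacity L q (oneZero L) (lastOneSet L) := by
    rw [hcap]; exact hdir_pos
  refine ⟨hcap_pos, ?_, ?_⟩
  · -- lower bound
    rw [hThit, hcap]
    have huη : u η = N / dirichlet L q fstar := by
      rw [hNid]
      field_simp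
    rw [huη, ← hwa]
    exact (div_le_div_iff_of_pos_right hdir_pos).2 hN_lower
  · rw [hThit, hcap]
    have huη : u η = N / dirichlet L q fstar := by
      rw [hNid]
      field_simp
    rw [huη]
    exact (div_le_div_iff_of_pos_right hdir_pos).2 hN_upper

end Crux

/-- the hitting time is comparable to `q` over the capacity.
There is a universal `c > 0` such that for every `γ ∈ (0,1]` and every `q ∈ (0,1/2)` with
`L = ⌊1/q^γ⌋ ≥ 2`, the East model on `{1,…,L}` satisfies
`q·c/C(𝟙0,B) ≤ T_hit(L) ≤ q/C(𝟙0,B)` with `B = {σ : σ_L = 1}`. -/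
theorem hitting_time_capacity_bounds :
    ∃ c : ℝ, 0 < c ∧
      ∀ γ : ℝ, 0 < γ → γ ≤ 1 → ∀ q : ℝ, 0 < q → q < 1 / 2 →
        2 ≤ ⌊(1 : ℝ) / q ^ γ⌋₊ →
        q * c /
            capacity (⌊(1 : ℝ) / q ^ γ⌋₊) q (oneZero (⌊(1 : ℝ) / q ^ γ⌋₊))
              (lastOneSet (⌊(1 : ℝ) / q ^ γ⌋₊)) ≤
          Thit (⌊(1 : ℝ) / q ^ γ⌋₊) q ∧
        Thit (⌊(1 : ℝ) / q ^ γ⌋₊) q ≤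
          q /
            capacity (⌊(1 : ℝ) / q ^ γ⌋₊) q (oneZero (⌊(1 : ℝ) / q ^ γ⌋₊))
              (lastOneSet (⌊(1 : ℝ) / q ^ γ⌋₊)) := by
  refine ⟨1/8, by norm_num, ?_⟩
  intro γ hγ0 hγ1 q hq0 hq12 hL2
  set L := ⌊(1 : ℝ) / q ^ γ⌋₊ with hLdef
  have hq1 : q < 1 := by linarith
  have hL0 : 0 < L := by omega
  obtain ⟨hcap_pos, hlow, hup⟩ := Thit_bounds L q hq0 hq1 hL0
  -- the elementary estimate (1-q)^(L-1) ≥ 1/8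
  have hqγ : q ≤ q ^ γ := by
    have := Real.rpow_le_rpow_of_exponent_ge hq0 hq1.le hγ1
    rwa [Real.rpow_one] at this
  have hqγ_pos : 0 < q ^ γ := Real.rpow_pos_of_pos hq0 γ
  have hfloor : (L : ℝ) ≤ 1 / q ^ γ := Nat.floor_le (by positivity)
  have hLq : (L : ℝ) ≤ 1 / q :=
    le_trans hfloor (one_div_le_one_div_of_le hq0 hqγ)
  have hqL : q * (L : ℝ) ≤ 1 := by
    calc q * (L : ℝ) ≤ q * (1 / q) := mul_le_mul_of_nonneg_left hLq hq0.le
      _ = 1 := by field_simp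
  have hqL1 : q * ((L : ℝ) - 1) ≤ 1 := by nlinarith
  have hexp1 : Real.exp (-(2 * q)) ≤ 1 - q := by
    have h1 : 2 * q + 1 ≤ Real.exp (2 * q) := Real.add_one_le_exp (2 * q)
    have h3 : 1 ≤ (1 - q) * Real.exp (2 * q) := by nlinarith
    calc Real.exp (-(2 * q)) = Real.exp (-(2 * q)) * 1 := (mul_one _).symm
      _ ≤ Real.exp (-(2 * q)) * ((1 - q) * Real.exp (2 * q)) :=
          mul_le_mul_of_nonneg_left h3 (Real.exp_pos _).le
      _ = (1 - q) * (Real.exp (-(2 * q)) * Real.exp (2 * q)) := by ring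
      _ = (1 - q) * 1 := by rw [← Real.exp_add]; norm_num
      _ = 1 - q := mul_one _
  have hpow : Real.exp (-(2 * q)) ^ (L - 1) ≤ (1 - q) ^ (L - 1) :=
    pow_le_pow_left₀ (Real.exp_pos _).le hexp1 _
  have hexp2 : Real.exp (-(2 * q)) ^ (L - 1)
      = Real.exp (((L - 1 : ℕ) : ℝ) * (-(2 * q))) := (Real.exp_nat_mul _ _).symm
  have hcast : ((L - 1 : ℕ) : ℝ) = (L : ℝ) - 1 := by
    rw [Nat.cast_sub (by omega : 1 ≤ L)]
    norm_num
  have harg : (-2 : ℝ) ≤ ((L - 1 : ℕ) : ℝ) * (-(2 * q)) := by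
    rw [hcast]
    nlinarith
  have hexp3 : Real.exp (-2) ≤ Real.exp (((L - 1 : ℕ) : ℝ) * (-(2 * q))) :=
    Real.exp_le_exp.2 harg
  have he8 : Real.exp (2:ℝ) ≤ 8 := by
    have h := Real.exp_one_lt_d9
    have h2 : Real.exp (2:ℝ) = Real.exp 1 * Real.exp 1 := by
      rw [← Real.exp_add]; norm_num
    nlinarith [Real.exp_pos 1]
  have he2 : (1 : ℝ) / 8 ≤ Real.exp (-2) := by
    rw [Real.exp_neg, ← one_div]
    exact one_div_le_one_div_of_le (Real.exp_pos 2) he8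
  have h8 : (1 : ℝ) / 8 ≤ (1 - q) ^ (L - 1) := by
    calc (1 : ℝ) / 8 ≤ Real.exp (-2) := he2
      _ ≤ Real.exp (((L - 1 : ℕ) : ℝ) * (-(2 * q))) := hexp3
      _ = Real.exp (-(2 * q)) ^ (L - 1) := hexp2.symm
      _ ≤ (1 - q) ^ (L - 1) := hpow
  constructor
  · calc q * (1 / 8) / capacity L q (oneZero L) (lastOneSet L)
        ≤ q * (1 - q) ^ (L - 1) / capacity L q (oneZero L) (lastOneSet L) := by
          apply (div_le_div_iff_of_pos_right hcap_pos).2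
          exact mul_le_mul_of_nonneg_left h8 hq0.le
      _ ≤ Thit L q := hlow
  · exact hup


end

end East
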